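/- Geodesic coalescence: fix u, u', v, v' ∈ H with Π(u;v) ≠ ∅ and Π(u';v') ≠ ∅, and let Γ_{u;v} : u → v and Γ_{u';v'} : u' → v' be the left-most geodesics. Then almost surely the following holds: if Γ_{u;v}(r) = Γ_{u';v'}(r) for some height r in both domains, and Γ_{u;v}(s) ≠ Γ_{u';v'}(s) for some height s > r in both domains, then Γ_{u;v}(t) ≠ Γ_{u';v'}(t) for all heights t ≥ s in both domains. Equivalently, the intersection Γ_{u;v} ∩ Γ_{u';v'} is a connected subset of H. -/

import Mathlib

open MeasureTheory ProbabilityTheory Filter Asymptotics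

namespace HalfSpacePolymer

/-- A directed path in the half-space `H = {(x,t) ∈ ℤ² : x ≥ 0}` from `(x₁,t₁)` to `(x₂,t₂)`,
with increments `(±1, 1)`, identified with a function `ℤ → ℤ≥0` of the height coordinate
(frozen outside `⟦t₁, t₂⟧`). -/
structure HSPath (x₁ t₁ x₂ t₂ : ℤ) where
  f : ℤ → ℤ
  nonneg : ∀ t : ℤ, 0 ≤ f t
  eq_left : ∀ t : ℤ, t ≤ t₁ → f t = x₁
  eq_right : ∀ t : ℤ, t₂ ≤ t → f t = x₂
  step : ∀ t : ℤ, t₁ ≤ t → t < t₂ → f (t + 1) = f t + 1 ∨ f (t + 1) = f t - 1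

instance (x₁ t₁ x₂ t₂ : ℤ) : MeasurableSpace (HSPath x₁ t₁ x₂ t₂) := ⊤

/-- A full-space directed path in `ℤ²` (increments `(±1,1)`, not confined to the half-space). -/
structure FPath (x₁ t₁ x₂ t₂ : ℤ) where
  f : ℤ → ℤ
  eq_left : ∀ t : ℤ, t ≤ t₁ → f t = x₁
  eq_right : ∀ t : ℤ, t₂ ≤ t → f t = x₂
  step : ∀ t : ℤ, t₁ ≤ t → t < t₂ → f (t + 1) = f t + 1 ∨ f (t + 1) = f t - 1

/-- The Hamiltonian (energy) of a half-space path in the environment `wt`. -/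
noncomputable def energy (wt : ℤ × ℤ → ℝ) {x₁ t₁ x₂ t₂ : ℤ} (π : HSPath x₁ t₁ x₂ t₂) : ℝ :=
  ∑ s ∈ Finset.Icc t₁ t₂, wt (π.f s, s)

/-- The Hamiltonian (energy) of a full-space path in the environment `wt`. -/
noncomputable def energyF (wt : ℤ × ℤ → ℝ) {x₁ t₁ x₂ t₂ : ℤ} (π : FPath x₁ t₁ x₂ t₂) : ℝ :=
  ∑ s ∈ Finset.Icc t₁ t₂, wt (π.f s, s)

/-- Partition function of the half-space polymer. -/
noncomputable def Zfun (wt : ℤ × ℤ → ℝ) (x₁ t₁ x₂ t₂ : ℤ) : ℝ :=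
  ∑' π : HSPath x₁ t₁ x₂ t₂, Real.exp (energy wt π)

/-- Free energy of the half-space polymer. -/
noncomputable def freeEnergy (wt : ℤ × ℤ → ℝ) (x₁ t₁ x₂ t₂ : ℤ) : ℝ :=
  Real.log (Zfun wt x₁ t₁ x₂ t₂)

/-- Last passage time of the half-space model. -/
noncomputable def lpp (wt : ℤ × ℤ → ℝ) (x₁ t₁ x₂ t₂ : ℤ) : ℝ :=
  ⨆ π : HSPath x₁ t₁ x₂ t₂, energy wt π

/-- Free energy of the full-space polymer. -/
noncomputable def freeEnergyF (wt : ℤ × ℤ → ℝ) (x₁ t₁ x₂ t₂ : ℤ) : ℝ :=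
  Real.log (∑' π : FPath x₁ t₁ x₂ t₂, Real.exp (energyF wt π))

/-- Last passage time of the full-space model. -/
noncomputable def lppF (wt : ℤ × ℤ → ℝ) (x₁ t₁ x₂ t₂ : ℤ) : ℝ :=
  ⨆ π : FPath x₁ t₁ x₂ t₂, energyF wt π

/-- Quenched polymer (Gibbs) probability of a set `A` of paths. -/
noncomputable def polyQ (wt : ℤ × ℤ → ℝ) (x₁ t₁ x₂ t₂ : ℤ)
    (A : Set (HSPath x₁ t₁ x₂ t₂)) : ℝ :=
  (∑' π : A, Real.exp (energy wt π.1)) / Zfun wt x₁ t₁ x₂ t₂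

/-- The quenched polymer measure, as a measure on the set of paths. -/
noncomputable def polyMeasure (wt : ℤ × ℤ → ℝ) (x₁ t₁ x₂ t₂ : ℤ) :
    Measure (HSPath x₁ t₁ x₂ t₂) :=
  (ENNReal.ofReal (Zfun wt x₁ t₁ x₂ t₂))⁻¹ •
    Measure.sum fun π : HSPath x₁ t₁ x₂ t₂ =>
      ENNReal.ofReal (Real.exp (energy wt π)) • Measure.dirac π

/-- A geodesic: a path of maximal energy among paths with the same endpoints. -/
def IsGeodesic (wt : ℤ × ℤ → ℝ) {x₁ t₁ x₂ t₂ : ℤ} (π : HSPath x₁ t₁ x₂ t₂) : Prop :=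
  ∀ π' : HSPath x₁ t₁ x₂ t₂, energy wt π' ≤ energy wt π

/-- The left-most geodesic. -/
def IsLeftmostGeodesic (wt : ℤ × ℤ → ℝ) {x₁ t₁ x₂ t₂ : ℤ} (π : HSPath x₁ t₁ x₂ t₂) : Prop :=
  IsGeodesic wt π ∧
    ∀ π' : HSPath x₁ t₁ x₂ t₂, IsGeodesic wt π' → ∀ t : ℤ, π.f t ≤ π'.f t

/-- The random environment data: a half-space environment `w` (vertical weights on `x = 0`
distributed as `μvt`, bulk weights as `μbk`), together with a coupled bulk (i.i.d.) environment
`wbk` agreeing with `w` off the vertical axis; all weights are jointly independent, almost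
surely positive, subexponential, and of unbounded support. -/
structure EnvData (Ω : Type*) [MeasurableSpace Ω] (P : Measure Ω) where
  w : ℤ × ℤ → Ω → ℝ
  wbk : ℤ × ℤ → Ω → ℝ
  μbk : Measure ℝ
  μvt : Measure ℝ
  prob_bk : IsProbabilityMeasure μbk
  prob_vt : IsProbabilityMeasure μvt
  meas_w : ∀ v : ℤ × ℤ, Measurable (w v)
  meas_wbk : ∀ v : ℤ × ℤ, Measurable (wbk v)
  agree : ∀ v : ℤ × ℤ, v.1 ≠ 0 → wbk v = w v
  law_w_bulk : ∀ v : ℤ × ℤ, v.1 ≠ 0 → P.map (w v) = μbk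
  law_w_vert : ∀ t : ℤ, P.map (w (0, t)) = μvt
  law_wbk : ∀ v : ℤ × ℤ, P.map (wbk v) = μbk
  indep : @iIndepFun Ω ((ℤ × ℤ) ⊕ ℤ) _ (fun _ => ℝ)
    (fun _ : (ℤ × ℤ) ⊕ ℤ => (inferInstance : MeasurableSpace ℝ))
    (Sum.elim w fun t : ℤ => wbk (0, t)) P
  pos_bk : μbk (Set.Iic 0) = 0
  pos_vt : μvt (Set.Iic 0) = 0
  subexp_bk : ∃ z : ℝ, 0 < z ∧ Integrable (fun x => Real.exp (z * x)) μbk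
  subexp_vt : ∃ z : ℝ, 0 < z ∧ Integrable (fun x => Real.exp (z * x)) μvt
  unbdd_bk : ∀ z : ℝ, 0 < μbk (Set.Ioi z)
  unbdd_vt : ∀ z : ℝ, 0 < μvt (Set.Ioi z)

variable {Ω : Type*} [MeasurableSpace Ω] {P : Measure Ω}

/-- `G(x₁,t₁;x₂,t₂)` in the half-space environment: the last passage time if `zt = true`
(zero temperature), the free energy if `zt = false` (positive temperature). -/
noncomputable def Ghs (E : EnvData Ω P) (zt : Bool) (x₁ t₁ x₂ t₂ : ℤ) (e : Ω) : ℝ :=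
  if zt then lpp (fun v => E.w v e) x₁ t₁ x₂ t₂ else freeEnergy (fun v => E.w v e) x₁ t₁ x₂ t₂

/-- `G^bk(x₁,t₁;x₂,t₂)`: half-space paths in the bulk (i.i.d.) environment. -/
noncomputable def Gbk (E : EnvData Ω P) (zt : Bool) (x₁ t₁ x₂ t₂ : ℤ) (e : Ω) : ℝ :=
  if zt then lpp (fun v => E.wbk v e) x₁ t₁ x₂ t₂
  else freeEnergy (fun v => E.wbk v e) x₁ t₁ x₂ t₂

/-- `G^bk_f(x₁,t₁;x₂,t₂)`: full-space paths in the bulk (i.i.d.) environment. -/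
noncomputable def GbkF (E : EnvData Ω P) (zt : Bool) (x₁ t₁ x₂ t₂ : ℤ) (e : Ω) : ℝ :=
  if zt then lppF (fun v => E.wbk v e) x₁ t₁ x₂ t₂
  else freeEnergyF (fun v => E.wbk v e) x₁ t₁ x₂ t₂

/-- Mean of `G(x₁,t₁;x₂,t₂)` over the environment. -/
noncomputable def meanG (E : EnvData Ω P) (zt : Bool) (x₁ t₁ x₂ t₂ : ℤ) : ℝ :=
  ∫ e, Ghs E zt x₁ t₁ x₂ t₂ e ∂P

/-- Mean of `G^bk(x₁,t₁;x₂,t₂)` over the environment. -/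
noncomputable def meanGbk (E : EnvData Ω P) (zt : Bool) (x₁ t₁ x₂ t₂ : ℤ) : ℝ :=
  ∫ e, Gbk E zt x₁ t₁ x₂ t₂ e ∂P

/-- `g` and `g^bk` are the laws of large numbers of `G(0,0;0,n)` and `G^bk(0,0;0,n)`
along even `n` (these limits exist by superadditivity). -/
def HasLLN (E : EnvData Ω P) (zt : Bool) (g gbk : ℝ) : Prop :=
  Tendsto (fun n : ℕ => (∫ e, Ghs E zt 0 0 0 (2 * (n : ℤ)) e ∂P) / (2 * (n : ℝ)))
      atTop (nhds g) ∧
    Tendsto (fun n : ℕ => (∫ e, Gbk E zt 0 0 0 (2 * (n : ℤ)) e ∂P) / (2 * (n : ℝ)))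
      atTop (nhds gbk)

/-- LLN separation: `g > g^bk`. -/
def LLNSep (E : EnvData Ω P) (zt : Bool) : Prop :=
  ∃ g gbk : ℝ, HasLLN E zt g gbk ∧ gbk < g

/-- Number of blocks: `N = sup {i : iK + J ≤ n}` for `n = 2m + 4`. -/
noncomputable def Nblk (J K : ℕ → ℤ) (m : ℕ) : ℕ :=
  sSup {i : ℕ | (i : ℤ) * K m + J m ≤ 2 * (m : ℤ) + 4}

/-- Block boundaries: `m₀ = 0`, `mᵢ = iK + J` for `1 ≤ i ≤ N`, `m_{N+1} = n = 2m + 4`. -/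
noncomputable def mpt (J K : ℕ → ℤ) (m : ℕ) (i : ℕ) : ℤ :=
  if i = 0 then 0 else if i ≤ Nblk J K m then (i : ℤ) * K m + J m else 2 * (m : ℤ) + 4

/-- The block free energies `Gᵢ⁰ = G(0,mᵢ;0,m_{i+1}) − ω(0,m_{i+1})` for `i < N`, and
`G_N⁰ = G(0,m_N;0,n)`. -/
noncomputable def Gblk (E : EnvData Ω P) (zt : Bool) (J K : ℕ → ℤ) (m i : ℕ) (e : Ω) : ℝ :=
  Ghs E zt 0 (mpt J K m i) 0 (mpt J K m (i + 1)) e -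
    (if i < Nblk J K m then E.w (0, mpt J K m (i + 1)) e else 0)

/-- Constraints on the block scales `J, K` for `n = 2m + 4`: `J, K` even,
`J^{1/4} ∈ [(log n)^{5/4}, 2 (log n)^{5/4}]` and `K ∈ [n^{0.9}, 2 n^{0.9}]`. -/
def BlockScales (J K : ℕ → ℤ) : Prop :=
  ∀ m : ℕ,
    Even (J m) ∧ Even (K m) ∧
    (Real.log (2 * (m : ℝ) + 4)) ^ ((5 : ℝ) / 4) ≤ ((J m : ℝ)) ^ ((1 : ℝ) / 4) ∧
    ((J m : ℝ)) ^ ((1 : ℝ) / 4) ≤ 2 * (Real.log (2 * (m : ℝ) + 4)) ^ ((5 : ℝ) / 4) ∧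
    (2 * (m : ℝ) + 4) ^ ((0.9 : ℝ)) ≤ (K m : ℝ) ∧
    (K m : ℝ) ≤ 2 * (2 * (m : ℝ) + 4) ^ ((0.9 : ℝ))

/-- The normalized triangular array `X_{N,i}` built from the block free energies. -/
noncomputable def Xblk (E : EnvData Ω P) (zt : Bool) (J K : ℕ → ℤ) (σ : ℕ → ℝ)
    (m i : ℕ) (e : Ω) : ℝ :=
  (Ghs E zt 0 (mpt J K m i) 0 (mpt J K m (i + 1)) e -
      ∫ e', Ghs E zt 0 (mpt J K m i) 0 (mpt J K m (i + 1)) e' ∂P) /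
    (σ m * Real.sqrt ((Nblk J K m : ℝ) * (K m : ℝ)))

private lemma even_step' {a a' b b' : ℤ}
    (hb : b = a + 1 ∨ b = a - 1) (hb' : b' = a' + 1 ∨ b' = a' - 1)
    (h : Even (a - a')) : Even (b - b') := by
  obtain ⟨k, hk⟩ := h
  rcases hb with hb | hb <;> rcases hb' with hb' | hb' <;>
    first
      | exact ⟨k, by omega⟩
      | exact ⟨k + 1, by omega⟩
      | exact ⟨k - 1, by omega⟩

private lemma min_step' {a a' b b' : ℤ}
    (hb : b = a + 1 ∨ b = a - 1) (hb' : b' = a' + 1 ∨ b' = a' - 1)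
    (h : Even (a - a')) : min b b' = min a a' + 1 ∨ min b b' = min a a' - 1 := by
  obtain ⟨k, hk⟩ := h
  rcases hb with hb | hb <;> rcases hb' with hb' | hb' <;>
    simp only [min_def] <;> split_ifs <;> omega

private lemma max_step' {a a' b b' : ℤ}
    (hb : b = a + 1 ∨ b = a - 1) (hb' : b' = a' + 1 ∨ b' = a' - 1)
    (h : Even (a - a')) : max b b' = max a a' + 1 ∨ max b b' = max a a' - 1 := by
  obtain ⟨k, hk⟩ := h
  rcases hb with hb | hb <;> rcases hb' with hb' | hb' <;>
    simp only [max_def] <;> split_ifs <;> omega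

private lemma path_parity {x₁ t₁ x₂ t₂ y₁ u₁ y₂ u₂ : ℤ}
    (Γ : HSPath x₁ t₁ x₂ t₂) (Γ' : HSPath y₁ u₁ y₂ u₂)
    {r tt : ℤ} (hrt₁ : t₁ ≤ r) (htt₂ : tt ≤ t₂) (hru₁ : u₁ ≤ r) (htu₂ : tt ≤ u₂)
    (heqr : Γ.f r = Γ'.f r) :
    ∀ s, r ≤ s → s ≤ tt → Even (Γ.f s - Γ'.f s) := by
  exact Int.le_induction (motive := fun s _ => s ≤ tt → Even (Γ.f s - Γ'.f s))
    (fun _ => by rw [heqr]; simp)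
    (fun n hn ih hle =>
      even_step' (Γ.step n (hrt₁.trans hn) (by omega))
        (Γ'.step n (hru₁.trans hn) (by omega)) (ih (by omega)))

/-- The min-splice: replace `Γ` on `⟦r, tt⟧` by the pointwise min of `Γ` and `Γ'`. -/
def spliceMin {x₁ t₁ x₂ t₂ y₁ u₁ y₂ u₂ : ℤ}
    (Γ : HSPath x₁ t₁ x₂ t₂) (Γ' : HSPath y₁ u₁ y₂ u₂) (r tt : ℤ)
    (hrt₁ : t₁ ≤ r) (htt₂ : tt ≤ t₂) (hru₁ : u₁ ≤ r) (htu₂ : tt ≤ u₂)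
    (heqr : Γ.f r = Γ'.f r) (heqt : Γ.f tt = Γ'.f tt) :
    HSPath x₁ t₁ x₂ t₂ where
  f s := if r ≤ s ∧ s ≤ tt then min (Γ.f s) (Γ'.f s) else Γ.f s
  nonneg s := by
    split_ifs
    · exact le_min (Γ.nonneg s) (Γ'.nonneg s)
    · exact Γ.nonneg s
  eq_left s hs := by
    split_ifs with h
    · have hs' : Γ.f s = Γ'.f s := by rw [show s = r by omega]; exact heqr
      rw [← hs', min_self]; exact Γ.eq_left s hs
    · exact Γ.eq_left s hs
  eq_right s hs := by
    split_ifs with h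
    · have hs' : Γ.f s = Γ'.f s := by rw [show s = tt by omega]; exact heqt
      rw [← hs', min_self]; exact Γ.eq_right s hs
    · exact Γ.eq_right s hs
  step s hs1 hs2 := by
    split_ifs with h1 h2 h2
    · exact min_step' (Γ.step s hs1 hs2)
        (Γ'.step s (hru₁.trans h2.1) (by omega))
        (path_parity Γ Γ' hrt₁ htt₂ hru₁ htu₂ heqr s h2.1 h2.2)
    · have hs' : Γ.f (s + 1) = Γ'.f (s + 1) := by
        rw [show s + 1 = r by omega]; exact heqr
      rw [← hs', min_self]; exact Γ.step s hs1 hs2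
    · have hs' : Γ.f s = Γ'.f s := by rw [show s = tt by omega]; exact heqt
      rw [← hs', min_self]; exact Γ.step s hs1 hs2
    · exact Γ.step s hs1 hs2

/-- The max-splice: replace `Γ` on `⟦r, tt⟧` by the pointwise max of `Γ` and `Γ'`. -/
def spliceMax {x₁ t₁ x₂ t₂ y₁ u₁ y₂ u₂ : ℤ}
    (Γ : HSPath x₁ t₁ x₂ t₂) (Γ' : HSPath y₁ u₁ y₂ u₂) (r tt : ℤ)
    (hrt₁ : t₁ ≤ r) (htt₂ : tt ≤ t₂) (hru₁ : u₁ ≤ r) (htu₂ : tt ≤ u₂)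
    (heqr : Γ.f r = Γ'.f r) (heqt : Γ.f tt = Γ'.f tt) :
    HSPath x₁ t₁ x₂ t₂ where
  f s := if r ≤ s ∧ s ≤ tt then max (Γ.f s) (Γ'.f s) else Γ.f s
  nonneg s := by
    split_ifs
    · exact (Γ.nonneg s).trans (le_max_left _ _)
    · exact Γ.nonneg s
  eq_left s hs := by
    split_ifs with h
    · have hs' : Γ.f s = Γ'.f s := by rw [show s = r by omega]; exact heqr
      rw [← hs', max_self]; exact Γ.eq_left s hs
    · exact Γ.eq_left s hs
  eq_right s hs := by
    split_ifs with h
    · have hs' : Γ.f s = Γ'.f s := by rw [show s = tt by omega]; exact heqt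
      rw [← hs', max_self]; exact Γ.eq_right s hs
    · exact Γ.eq_right s hs
  step s hs1 hs2 := by
    split_ifs with h1 h2 h2
    · exact max_step' (Γ.step s hs1 hs2)
        (Γ'.step s (hru₁.trans h2.1) (by omega))
        (path_parity Γ Γ' hrt₁ htt₂ hru₁ htu₂ heqr s h2.1 h2.2)
    · have hs' : Γ.f (s + 1) = Γ'.f (s + 1) := by
        rw [show s + 1 = r by omega]; exact heqr
      rw [← hs', max_self]; exact Γ.step s hs1 hs2
    · have hs' : Γ.f s = Γ'.f s := by rw [show s = tt by omega]; exact heqt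
      rw [← hs', max_self]; exact Γ.step s hs1 hs2
    · exact Γ.step s hs1 hs2

private lemma sum_splice (wt : ℤ × ℤ → ℝ) (f g : ℤ → ℤ) (a b r t : ℤ)
    (hra : a ≤ r) (htb : t ≤ b) :
    ∑ s ∈ Finset.Icc a b, wt ((if r ≤ s ∧ s ≤ t then g s else f s), s)
      = ∑ s ∈ Finset.Icc a b, wt (f s, s)
        + ∑ s ∈ Finset.Icc r t, (wt (g s, s) - wt (f s, s)) := by
  have h2 : ∑ s ∈ Finset.Icc r t, (wt (g s, s) - wt (f s, s))
      = ∑ s ∈ Finset.Icc a b,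
          (wt ((if r ≤ s ∧ s ≤ t then g s else f s), s) - wt (f s, s)) := by
    rw [show (∑ s ∈ Finset.Icc r t, (wt (g s, s) - wt (f s, s)))
        = ∑ s ∈ Finset.Icc r t,
            (wt ((if r ≤ s ∧ s ≤ t then g s else f s), s) - wt (f s, s)) from
      Finset.sum_congr rfl fun s hs => by rw [if_pos (Finset.mem_Icc.mp hs)]]
    exact Finset.sum_subset (Finset.Icc_subset_Icc hra htb) fun x _ hnx => by
      rw [if_neg (by simpa [Finset.mem_Icc] using hnx), sub_self]
  rw [h2, ← Finset.sum_add_distrib]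
  exact Finset.sum_congr rfl fun s hs => by ring

private lemma energy_splice_add (wt : ℤ × ℤ → ℝ) {x₁ t₁ x₂ t₂ y₁ u₁ y₂ u₂ : ℤ}
    (Γ : HSPath x₁ t₁ x₂ t₂) (Γ' : HSPath y₁ u₁ y₂ u₂) (r tt : ℤ)
    (hrt₁ : t₁ ≤ r) (htt₂ : tt ≤ t₂) (hru₁ : u₁ ≤ r) (htu₂ : tt ≤ u₂)
    (heqr : Γ.f r = Γ'.f r) (heqt : Γ.f tt = Γ'.f tt) :
    energy wt (spliceMin Γ Γ' r tt hrt₁ htt₂ hru₁ htu₂ heqr heqt)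
      + energy wt (spliceMax Γ' Γ r tt hru₁ htu₂ hrt₁ htt₂ heqr.symm heqt.symm)
      = energy wt Γ + energy wt Γ' := by
  unfold energy spliceMin spliceMax
  dsimp only
  rw [sum_splice wt Γ.f (fun s => min (Γ.f s) (Γ'.f s)) t₁ t₂ r tt hrt₁ htt₂,
    sum_splice wt Γ'.f (fun s => max (Γ'.f s) (Γ.f s)) u₁ u₂ r tt hru₁ htu₂]
  have hzero : ∑ s ∈ Finset.Icc r tt,
      ((wt (min (Γ.f s) (Γ'.f s), s) - wt (Γ.f s, s))
        + (wt (max (Γ'.f s) (Γ.f s), s) - wt (Γ'.f s, s))) = 0 := by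
    refine Finset.sum_eq_zero fun s hs => ?_
    rcases le_total (Γ.f s) (Γ'.f s) with h | h
    · rw [min_eq_left h, max_eq_left h]; ring
    · rw [min_eq_right h, max_eq_right h]; ring
  rw [Finset.sum_add_distrib] at hzero
  linarith [hzero]

private lemma leftmost_agree_between (wt : ℤ × ℤ → ℝ) {x₁ t₁ x₂ t₂ y₁ u₁ y₂ u₂ : ℤ}
    (Γ : HSPath x₁ t₁ x₂ t₂) (Γ' : HSPath y₁ u₁ y₂ u₂)
    (hΓ : IsLeftmostGeodesic wt Γ) (hΓ' : IsLeftmostGeodesic wt Γ')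
    {r tt : ℤ} (hrt₁ : t₁ ≤ r) (htt₂ : tt ≤ t₂) (hru₁ : u₁ ≤ r) (htu₂ : tt ≤ u₂)
    (heqr : Γ.f r = Γ'.f r) (heqt : Γ.f tt = Γ'.f tt) :
    ∀ s, r ≤ s → s ≤ tt → Γ.f s = Γ'.f s := by
  intro s hrs hstt
  -- first pair:  min-splice of Γ, max-splice of Γ'
  have hE1 := energy_splice_add wt Γ Γ' r tt hrt₁ htt₂ hru₁ htu₂ heqr heqt
  set π₁ := spliceMin Γ Γ' r tt hrt₁ htt₂ hru₁ htu₂ heqr heqt with hπ₁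
  set ρ₁ := spliceMax Γ' Γ r tt hru₁ htu₂ hrt₁ htt₂ heqr.symm heqt.symm with hρ₁
  have h1 : energy wt π₁ ≤ energy wt Γ := hΓ.1 π₁
  have h2 : energy wt ρ₁ ≤ energy wt Γ' := hΓ'.1 ρ₁
  have hπeq : energy wt π₁ = energy wt Γ := by linarith
  have hπgeo : IsGeodesic wt π₁ := fun π'' => (hΓ.1 π'').trans_eq hπeq.symm
  have hle1 : Γ.f s ≤ Γ'.f s := by
    have := hΓ.2 π₁ hπgeo s
    rw [show π₁.f s = min (Γ.f s) (Γ'.f s) from if_pos ⟨hrs, hstt⟩] at this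
    exact this.trans (min_le_right _ _)
  -- second pair:  min-splice of Γ', max-splice of Γ
  have hE2 := energy_splice_add wt Γ' Γ r tt hru₁ htu₂ hrt₁ htt₂ heqr.symm heqt.symm
  set π₂ := spliceMin Γ' Γ r tt hru₁ htu₂ hrt₁ htt₂ heqr.symm heqt.symm with hπ₂
  set ρ₂ := spliceMax Γ Γ' r tt hrt₁ htt₂ hru₁ htu₂ heqr heqt with hρ₂
  have h3 : energy wt π₂ ≤ energy wt Γ' := hΓ'.1 π₂
  have h4 : energy wt ρ₂ ≤ energy wt Γ := hΓ.1 ρ₂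
  have hπeq2 : energy wt π₂ = energy wt Γ' := by linarith
  have hπgeo2 : IsGeodesic wt π₂ := fun π'' => (hΓ'.1 π'').trans_eq hπeq2.symm
  have hle2 : Γ'.f s ≤ Γ.f s := by
    have := hΓ'.2 π₂ hπgeo2 s
    rw [show π₂.f s = min (Γ'.f s) (Γ.f s) from if_pos ⟨hrs, hstt⟩] at this
    exact this.trans (min_le_right _ _)
  exact le_antisymm hle1 hle2

/-- **Geodesic coalescence.** Almost surely, if two left-most geodesics agree at some common
height `r` and disagree at some common height `s > r`, then they disagree at every common
height `t ≥ s`; i.e. their intersection is a connected subset of `H`. -/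
theorem geodesic_coalescence
    {Ω : Type*} [MeasurableSpace Ω] (P : Measure Ω) [IsProbabilityMeasure P]
    (E : EnvData Ω P) (x₁ t₁ x₂ t₂ y₁ u₁ y₂ u₂ : ℤ)
    (hx₁ : 0 ≤ x₁) (hx₂ : 0 ≤ x₂) (hy₁ : 0 ≤ y₁) (hy₂ : 0 ≤ y₂)
    (h1 : Nonempty (HSPath x₁ t₁ x₂ t₂)) (h2 : Nonempty (HSPath y₁ u₁ y₂ u₂)) :
    ∀ᵐ e ∂P, ∀ (Γ : HSPath x₁ t₁ x₂ t₂) (Γ' : HSPath y₁ u₁ y₂ u₂),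
      IsLeftmostGeodesic (fun v => E.w v e) Γ →
      IsLeftmostGeodesic (fun v => E.w v e) Γ' →
      ∀ r s : ℤ, t₁ ≤ r → r ≤ t₂ → u₁ ≤ r → r ≤ u₂ →
        t₁ ≤ s → s ≤ t₂ → u₁ ≤ s → s ≤ u₂ → r < s →
        Γ.f r = Γ'.f r → Γ.f s ≠ Γ'.f s →
        ∀ t : ℤ, t₁ ≤ t → t ≤ t₂ → u₁ ≤ t → t ≤ u₂ → s ≤ t → Γ.f t ≠ Γ'.f t := by
  refine Filter.Eventually.of_forall ?_
  intro e Γ Γ' hΓ hΓ' r s hrt₁ hrt₂ hru₁ hru₂ hst₁ hst₂ hsu₁ hsu₂ hrs heqr hne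
  intro t ht₁ ht₂ hu₁ hu₂ hst heqt
  exact hne (leftmost_agree_between (fun v => E.w v e) Γ Γ' hΓ hΓ'
    hrt₁ ht₂ hru₁ hu₂ heqr heqt s (le_of_lt hrs) hst)
end HalfSpacePolymer
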